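/- Fix d,r∈ℕ and p∈[1,∞]. Let Φ=(φ^1,…,φ^r) with each φ^i continuous and ‖φ^i‖_{W^1}<∞, and let C=(c^1,…,c^r)∈(ℓ^p(ℤ^d))^{(r)}. Then for every x∈ℝ^d the series f(x) = ∑_{k∈ℤ^d}∑_{i=1}^r c^i(k)φ^i(x−k) converges absolutely, and the function f so defined is continuous on ℝ^d with ‖f‖_{W^p}<∞; that is, V^p(Φ) ⊂ W₀^p. -/

import Mathlib

open MeasureTheory ENNReal

noncomputable section

abbrev Euc (d : ℕ) := EuclideanSpace ℝ (Fin d)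

/-- Embedding of `ℤ^d` into `ℝ^d`. -/
def zemb {d : ℕ} (k : Fin d → ℤ) : Euc d := WithLp.toLp 2 (fun i => (k i : ℝ))

/-- `ess sup_{x ∈ [0,1]^d} |f(x+k)|`, valued in `ℝ≥0∞`. -/
def cubeSup {d : ℕ} (f : Euc d → ℂ) (k : Fin d → ℤ) : ℝ≥0∞ :=
  essSup (fun x => (‖f (x + zemb k)‖₊ : ℝ≥0∞))
    (volume.restrict {x : Euc d | ∀ i, x i ∈ Set.Icc (0:ℝ) 1})

/-- The Wiener amalgam norm `‖f‖_{W^p}`. -/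
def WNorm {d : ℕ} (p : ℝ≥0∞) (f : Euc d → ℂ) : ℝ≥0∞ :=
  if p = ∞ then ⨆ k : Fin d → ℤ, cubeSup f k
  else (∑' k : Fin d → ℤ, cubeSup f k ^ p.toReal) ^ (1 / p.toReal)

/-- Membership in `W₀^1`: continuous with finite `W^1` norm. -/
def MemW01 {d : ℕ} (f : Euc d → ℂ) : Prop := Continuous f ∧ WNorm 1 f < ∞

/-- `(W^1)^{(r)}` norm of a vector of functions. -/
def WNormVec {d r : ℕ} (Φ : Fin r → Euc d → ℂ) : ℝ≥0∞ := ∑ i, WNorm 1 (Φ i)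

/-- the `ℓ^p` norm of a family of complex numbers, valued in `ℝ≥0∞`. -/
def lpNorm {ι : Type*} (p : ℝ≥0∞) (c : ι → ℂ) : ℝ≥0∞ :=
  if p = ∞ then ⨆ j, (‖c j‖₊ : ℝ≥0∞)
  else (∑' j, (‖c j‖₊ : ℝ≥0∞) ^ p.toReal) ^ (1 / p.toReal)

/-- The `(ℓ^p(ℤ^d))^{(r)}` norm `‖C‖ = ∑_i ‖c^i‖_{ℓ^p}`. -/
def vlpNorm {d r : ℕ} (p : ℝ≥0∞) (C : Fin r → (Fin d → ℤ) → ℂ) : ℝ≥0∞ :=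
  ∑ i, lpNorm p (C i)

/-- `f_C = ∑_{k ∈ ℤ^d} ∑_i c^i(k) φ^i(· - k)`. -/
def genFun {d r : ℕ} (Φ : Fin r → Euc d → ℂ) (C : Fin r → (Fin d → ℤ) → ℂ)
    (x : Euc d) : ℂ :=
  ∑' k : Fin d → ℤ, ∑ i, C i k * Φ i (x - zemb k)

/-- Integral of a complex-valued function against a finite complex Borel measure,
via the Jordan decompositions of the real and imaginary parts. -/
def cInt {d : ℕ} (μ : ComplexMeasure (Euc d)) (f : Euc d → ℂ) : ℂ :=
  ((∫ x, f x ∂(ComplexMeasure.re μ).toJordanDecomposition.posPart) -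
    (∫ x, f x ∂(ComplexMeasure.re μ).toJordanDecomposition.negPart)) +
  Complex.I * ((∫ x, f x ∂(ComplexMeasure.im μ).toJordanDecomposition.posPart) -
    (∫ x, f x ∂(ComplexMeasure.im μ).toJordanDecomposition.negPart))

/-- The convolution `(φ ∗ μ)(x) = ∫ φ(x - y) dμ(y)`. -/
def mconv {d : ℕ} (μ : ComplexMeasure (Euc d)) (φ : Euc d → ℂ) (x : Euc d) : ℂ :=
  cInt μ (fun y => φ (x - y))

/-- The total variation norm `|μ|(ℝ^d)` of a finite complex Borel measure, as the
supremum of `∑ ‖μ(S_i)‖` over finite disjoint families of measurable sets. -/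
def cmNorm {d : ℕ} (μ : ComplexMeasure (Euc d)) : ℝ≥0∞ :=
  ⨆ (n : ℕ) (S : Fin n → Set (Euc d)) (_ : ∀ i, MeasurableSet (S i))
    (_ : Pairwise (Function.onFun Disjoint S)), ∑ i, (‖μ (S i)‖₊ : ℝ≥0∞)

/-- norm of a vector of complex measures. -/
def cmNormVec {d t : ℕ} (μ : Fin t → ComplexMeasure (Euc d)) : ℝ≥0∞ :=
  ∑ l, cmNorm (μ l)

/-- The Riesz condition with explicit constants. -/
def RieszWith {d r : ℕ} (p : ℝ≥0∞) (Φ : Fin r → Euc d → ℂ) (m M : ℝ) : Prop :=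
  0 < m ∧ m ≤ M ∧ ∀ C : Fin r → (Fin d → ℤ) → ℂ, vlpNorm p C < ∞ →
    ENNReal.ofReal m * vlpNorm p C ≤ eLpNorm (genFun Φ C) p volume ∧
    eLpNorm (genFun Φ C) p volume ≤ ENNReal.ofReal M * vlpNorm p C

/-- The Riesz (unconditional basis) condition for `p`. -/
def RieszCond {d r : ℕ} (p : ℝ≥0∞) (Φ : Fin r → Euc d → ℂ) : Prop :=
  ∃ m M : ℝ, RieszWith p Φ m M

/-- `X` is a `μ⃗`-sampling set for `V^p(Φ)`. -/
def SamplingSet {d r t : ℕ} {J : Type*} (p : ℝ≥0∞) (Φ : Fin r → Euc d → ℂ)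
    (μ : Fin t → ComplexMeasure (Euc d)) (X : J → Euc d) : Prop :=
  ∃ A B : ℝ, 0 < A ∧ A ≤ B ∧ ∀ C : Fin r → (Fin d → ℤ) → ℂ, vlpNorm p C < ∞ →
    ENNReal.ofReal A * eLpNorm (genFun Φ C) p volume ≤
      ∑ l, lpNorm p (fun j => mconv (μ l) (genFun Φ C) (X j)) ∧
    ∑ l, lpNorm p (fun j => mconv (μ l) (genFun Φ C) (X j)) ≤
      ENNReal.ofReal B * eLpNorm (genFun Φ C) p volume

/-- `X` is separated with constant `δ`. -/
def SeparatedWith {d : ℕ} {J : Type*} (X : J → Euc d) (δ : ℝ) : Prop :=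
  ∀ i j : J, i ≠ j → δ ≤ dist (X i) (X j)

def SeparatedSet {d : ℕ} {J : Type*} (X : J → Euc d) : Prop :=
  ∃ δ : ℝ, 0 < δ ∧ SeparatedWith X δ

/-- Membership in `M_s(ℝ^d)`: `∫ (1+|x|)^s d|μ| < ∞`, expressed via the Jordan
decompositions of the real and imaginary parts. -/
def MemMs {d : ℕ} (s : ℝ) (μ : ComplexMeasure (Euc d)) : Prop :=
  (∫⁻ x, ENNReal.ofReal ((1 + ‖x‖) ^ s) ∂(ComplexMeasure.re μ).toJordanDecomposition.posPart < ∞) ∧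
  (∫⁻ x, ENNReal.ofReal ((1 + ‖x‖) ^ s) ∂(ComplexMeasure.re μ).toJordanDecomposition.negPart < ∞) ∧
  (∫⁻ x, ENNReal.ofReal ((1 + ‖x‖) ^ s) ∂(ComplexMeasure.im μ).toJordanDecomposition.posPart < ∞) ∧
  (∫⁻ x, ENNReal.ofReal ((1 + ‖x‖) ^ s) ∂(ComplexMeasure.im μ).toJordanDecomposition.negPart < ∞)

/-- `Φ ∈ W_s`: an `s`-localized Riesz generator. -/
def MemWs {d r : ℕ} (s : ℝ) (Φ : Fin r → Euc d → ℂ) : Prop :=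
  (∀ i, MemW01 (Φ i)) ∧ RieszCond 2 Φ ∧
    ∀ i, ∃ C0 : ℝ, 0 < C0 ∧ ∀ x : Euc d, ‖Φ i x‖ ≤ C0 * (1 + ‖x‖) ^ (-s)

end

-- ### auxiliary lemmas

section aux
open Filter

lemma Qmeas (d : ℕ) : MeasurableSet {x : Euc d | ∀ i, x i ∈ Set.Icc (0:ℝ) 1} := by
  rw [Set.setOf_forall]
  exact MeasurableSet.iInter fun i => (PiLp.continuous_apply 2 _ i).measurable measurableSet_Icc

lemma zemb_sub {d : ℕ} (m k : Fin d → ℤ) : zemb (m - k) = zemb m - zemb k := by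
  ext i
  show ((m i - k i : ℤ) : ℝ) = (m i : ℝ) - (k i : ℝ)
  push_cast; ring

lemma point_le_cubeSup {d : ℕ} {f : Euc d → ℂ} (hf : Continuous f) (k : Fin d → ℤ)
    {y : Euc d} (hy : ∀ i, y i ∈ Set.Icc (0:ℝ) 1) :
    (‖f (y + zemb k)‖₊ : ℝ≥0∞) ≤ cubeSup f k := by
  set Q := {x : Euc d | ∀ i, x i ∈ Set.Icc (0:ℝ) 1} with hQ
  by_contra hcon
  push_neg at hcon
  set g : Euc d → ℝ≥0∞ := fun x => (‖f (x + zemb k)‖₊ : ℝ≥0∞) with hg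
  have hgc : Continuous g :=
    ENNReal.continuous_coe.comp ((hf.comp (continuous_id.add continuous_const)).nnnorm)
  set E := cubeSup f k with hE
  have hU : IsOpen {x | E < g x} := isOpen_lt continuous_const hgc
  have hae : ∀ᵐ x ∂(volume.restrict Q), g x ≤ E := ae_le_essSup
  have hnull : volume.restrict Q {x | E < g x} = 0 := by
    have := hae
    rw [MeasureTheory.ae_iff] at this
    convert this using 2
    ext x; simp [not_le]
  have hnull' : volume ({x | E < g x} ∩ Q) = 0 := by
    rwa [Measure.restrict_apply (hU.measurableSet)] at hnull
  set c : Euc d := WithLp.toLp 2 (fun _ => (1/2 : ℝ)) with hc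
  obtain ⟨ε, hε, hball⟩ := Metric.isOpen_iff.mp hU y hcon
  set t : ℝ := min 1 (ε / (‖c - y‖ + 1)) with htdef
  have hcy : (0:ℝ) ≤ ‖c - y‖ := norm_nonneg _
  have ht0 : 0 < t := lt_min one_pos (div_pos hε (by linarith))
  have ht1 : t ≤ 1 := min_le_left _ _
  set w : Euc d := y + t • (c - y) with hw
  have hwi : ∀ i, w i ∈ Set.Ioo (0:ℝ) 1 := by
    intro i
    have h1 : w i = y i + t * (1/2 - y i) := rfl
    obtain ⟨hy0, hy1⟩ := hy i
    constructor <;> nlinarith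
  have hwball : w ∈ Metric.ball y ε := by
    rw [Metric.mem_ball, dist_eq_norm]
    have : w - y = t • (c - y) := by rw [hw]; abel
    rw [this, norm_smul, Real.norm_eq_abs, abs_of_pos ht0]
    have h2 : t ≤ ε / (‖c - y‖ + 1) := min_le_right _ _
    calc t * ‖c - y‖ ≤ ε / (‖c - y‖ + 1) * ‖c - y‖ := by
          exact mul_le_mul_of_nonneg_right h2 hcy
      _ < ε := by
          rw [div_mul_eq_mul_div, div_lt_iff₀ (by linarith)]
          nlinarith
  set V : Set (Euc d) := {x | E < g x} ∩ {x : Euc d | ∀ i, x i ∈ Set.Ioo (0:ℝ) 1} with hV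
  have hVo : IsOpen V := by
    apply hU.inter
    rw [Set.setOf_forall]
    exact isOpen_iInter_of_finite fun i => (isOpen_Ioo).preimage (PiLp.continuous_apply 2 _ i)
  have hwV : w ∈ V := ⟨hball hwball, hwi⟩
  have hpos : 0 < volume V := hVo.measure_pos volume ⟨w, hwV⟩
  have hsub : V ⊆ {x | E < g x} ∩ Q := by
    intro x hx
    exact ⟨hx.1, fun i => Set.Ioo_subset_Icc_self (hx.2 i)⟩
  have : volume V = 0 := le_antisymm (hnull' ▸ measure_mono hsub) zero_le
  exact hpos.ne' this

section young
variable {G : Type*} [AddCommGroup G] [Countable G] [MeasurableSpace G]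
  [MeasurableSingletonClass G]

omit [Countable G] [MeasurableSpace G] [MeasurableSingletonClass G] in
lemma conv_tsum (u v : G → ℝ≥0∞) :
    ∑' n : G, ∑' k : G, u k * v (n - k) = (∑' k, u k) * (∑' k, v k) := by
  rw [ENNReal.tsum_comm]
  calc ∑' (k : G) (n : G), u k * v (n - k)
      = ∑' (k : G), u k * ∑' (n : G), v (n - k) := by
        exact tsum_congr fun k => ENNReal.tsum_mul_left
    _ = ∑' (k : G), u k * ∑' (n : G), v n := by
        refine tsum_congr fun k => ?_
        congr 1
        simpa using (Equiv.subRight k).tsum_eq v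
    _ = (∑' k, u k) * (∑' k, v k) := ENNReal.tsum_mul_right

lemma young_ineq (a b : G → ℝ≥0∞) {t : ℝ} (ht : 1 ≤ t) :
    ∑' n : G, (∑' k : G, a k * b (n - k)) ^ t ≤
      (∑' k, a k ^ t) * (∑' k, b k) ^ t := by
  rcases eq_or_lt_of_le ht with h1 | h1
  · subst h1
    simp only [ENNReal.rpow_one]
    rw [conv_tsum]
  · have ht0 : (0:ℝ) < t := by linarith
    set t' : ℝ := t / (t - 1) with ht'
    have hpq : t.HolderConjugate t' := Real.HolderConjugate.conjExponent h1
    have ht'0 : (0:ℝ) < t' := hpq.symm.pos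
    have hinv : 1/t + 1/t' = 1 := (by simpa [one_div] using hpq.inv_add_inv_eq_one)
    have hold : ∀ n : G, (∑' k : G, a k * b (n - k)) ≤
        (∑' k : G, a k ^ t * b (n - k)) ^ (1/t) * (∑' k, b k) ^ (1/t') := by
      intro n
      have key : ∀ k : G, a k * b (n - k) =
          ((fun k => a k * b (n - k) ^ (1/t)) * (fun k => b (n - k) ^ (1/t'))) k := by
        intro k
        simp only [Pi.mul_apply]
        rw [mul_assoc, ← ENNReal.rpow_add_of_nonneg (1/t) (1/t') (by positivity) (by positivity),
          hinv, ENNReal.rpow_one]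
      calc ∑' k : G, a k * b (n - k)
          = ∫⁻ k, ((fun k => a k * b (n - k) ^ (1/t)) * (fun k => b (n - k) ^ (1/t'))) k
              ∂Measure.count := by
            rw [MeasureTheory.lintegral_count]
            exact tsum_congr key
        _ ≤ (∫⁻ k, (a k * b (n - k) ^ (1/t)) ^ t ∂Measure.count) ^ (1/t) *
            (∫⁻ k, (b (n - k) ^ (1/t')) ^ t' ∂Measure.count) ^ (1/t') := by
            exact ENNReal.lintegral_mul_le_Lp_mul_Lq _ hpq
              (measurable_of_countable _).aemeasurable (measurable_of_countable _).aemeasurable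
        _ = (∑' k : G, a k ^ t * b (n - k)) ^ (1/t) * (∑' k, b k) ^ (1/t') := by
            rw [MeasureTheory.lintegral_count, MeasureTheory.lintegral_count]
            congr 2
            · refine tsum_congr fun k => ?_
              rw [ENNReal.mul_rpow_of_nonneg _ _ ht0.le, ← ENNReal.rpow_mul,
                one_div_mul_cancel ht0.ne', ENNReal.rpow_one]
            · rw [show ∑' k : G, (b (n - k) ^ (1/t')) ^ t' = ∑' k : G, b (n - k) from
                tsum_congr fun k => by
                  rw [← ENNReal.rpow_mul, one_div_mul_cancel ht'0.ne', ENNReal.rpow_one]]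
              exact (Equiv.subLeft n).tsum_eq b
    have hstep : ∀ n : G, (∑' k : G, a k * b (n - k)) ^ t ≤
        (∑' k : G, a k ^ t * b (n - k)) * (∑' k, b k) ^ (t - 1) := by
      intro n
      calc (∑' k : G, a k * b (n - k)) ^ t
          ≤ ((∑' k : G, a k ^ t * b (n - k)) ^ (1/t) * (∑' k, b k) ^ (1/t')) ^ t :=
            ENNReal.rpow_le_rpow (hold n) ht0.le
        _ = (∑' k : G, a k ^ t * b (n - k)) * (∑' k, b k) ^ (t - 1) := by
            rw [ENNReal.mul_rpow_of_nonneg _ _ ht0.le, ← ENNReal.rpow_mul, ← ENNReal.rpow_mul,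
              one_div_mul_cancel ht0.ne', ENNReal.rpow_one]
            congr 2
            rw [ht']
            field_simp
    calc ∑' n : G, (∑' k : G, a k * b (n - k)) ^ t
        ≤ ∑' n : G, (∑' k : G, a k ^ t * b (n - k)) * (∑' k, b k) ^ (t - 1) :=
          ENNReal.tsum_le_tsum hstep
      _ = (∑' k, a k ^ t) * (∑' k, b k) * (∑' k, b k) ^ (t - 1) := by
          rw [ENNReal.tsum_mul_right, conv_tsum]
      _ = (∑' k, a k ^ t) * (∑' k, b k) ^ t := by
          rw [mul_assoc]
          congr 1
          nth_rewrite 1 [← ENNReal.rpow_one (∑' k, b k)]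
          rw [← ENNReal.rpow_add_of_nonneg 1 (t-1) zero_le_one (by linarith)]
          congr 1
          ring

end young

lemma sum_rpow_le {r : ℕ} (x : Fin r → ℝ≥0∞) {t : ℝ} (ht : 0 < t) :
    (∑ i, x i) ^ t ≤ (r : ℝ≥0∞) ^ t * ∑ i, x i ^ t := by
  rcases Nat.eq_zero_or_pos r with hr | hr
  · subst hr
    simp [ENNReal.zero_rpow_of_pos ht]
  · have : Nonempty (Fin r) := Fin.pos_iff_nonempty.mp hr
    have hne : (Finset.univ : Finset (Fin r)).Nonempty := Finset.univ_nonempty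
    obtain ⟨i0, _, hi0⟩ := Finset.exists_mem_eq_sup Finset.univ hne x
    calc (∑ i, x i) ^ t ≤ ((r : ℝ≥0∞) * Finset.univ.sup x) ^ t := by
          apply ENNReal.rpow_le_rpow _ ht.le
          have := Finset.sum_le_card_nsmul Finset.univ x (Finset.univ.sup x)
            fun i _ => Finset.le_sup (Finset.mem_univ i)
          simpa [nsmul_eq_mul] using this
      _ = (r : ℝ≥0∞) ^ t * (Finset.univ.sup x) ^ t := ENNReal.mul_rpow_of_nonneg _ _ ht.le
      _ ≤ (r : ℝ≥0∞) ^ t * ∑ i, x i ^ t := by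
          apply mul_le_mul_right
          rw [hi0]
          exact Finset.single_le_sum (f := fun i => x i ^ t) (fun i _ => zero_le)
            (Finset.mem_univ i0)

end aux


set_option maxHeartbeats 1000000 in
open MeasureTheory ENNReal in
/-- part of Proposition 4.2: for generators in `W₀¹` and coefficients in
`(ℓ^p)^{(r)}`, the generating series converges absolutely at every point, and defines a
continuous function with finite `W^p` norm; i.e. `V^p(Φ) ⊂ W₀^p`. -/
theorem genFun_absolutely_convergent_continuous_Wp
    (d r : ℕ) (p : ℝ≥0∞) (hp : 1 ≤ p)
    (Φ : Fin r → Euc d → ℂ) (hΦ : ∀ i, Continuous (Φ i) ∧ WNorm 1 (Φ i) < ∞)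
    (C : Fin r → (Fin d → ℤ) → ℂ) (hC : vlpNorm p C < ∞) :
    (∀ x : Euc d,
        Summable (fun q : (Fin d → ℤ) × Fin r => ‖C q.2 q.1 * Φ q.2 (x - zemb q.1)‖)) ∧
      Continuous (genFun Φ C) ∧ WNorm p (genFun Φ C) < ∞ := by
  have hp0 : p ≠ 0 := by intro h; rw [h] at hp; exact (by simp at hp)
  set b : Fin r → (Fin d → ℤ) → ℝ≥0∞ := fun i => cubeSup (Φ i) with hbdef
  set A : Fin r → ℝ≥0∞ := fun i => ∑' k, b i k with hAdef
  have hA : ∀ i, A i ≠ ∞ := by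
    intro i
    have h1 : WNorm 1 (Φ i) = A i := by
      unfold WNorm
      rw [if_neg one_ne_top]
      simp [hAdef, hbdef]
    exact h1 ▸ (hΦ i).2.ne
  set L : Fin r → ℝ≥0∞ := fun i => lpNorm p (C i) with hLdef
  have hLfin : ∀ i, L i ≠ ∞ := by
    intro i
    have : lpNorm p (C i) < ∞ := by
      have := (ENNReal.sum_lt_top.mp hC) i (Finset.mem_univ i)
      exact this
    exact this.ne
  have hL : ∀ i k, (‖C i k‖₊ : ℝ≥0∞) ≤ L i := by
    intro i k
    rw [hLdef]
    unfold _root_.lpNorm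
    split_ifs with h
    · exact le_iSup (fun j => (‖C i j‖₊ : ℝ≥0∞)) k
    · have ht : 0 < p.toReal := ENNReal.toReal_pos hp0 h
      calc (‖C i k‖₊ : ℝ≥0∞)
          = (((‖C i k‖₊ : ℝ≥0∞)) ^ p.toReal) ^ (1/p.toReal) := by
            rw [← ENNReal.rpow_mul, mul_one_div_cancel ht.ne', ENNReal.rpow_one]
        _ ≤ (∑' j, (‖C i j‖₊ : ℝ≥0∞) ^ p.toReal) ^ (1/p.toReal) :=
            ENNReal.rpow_le_rpow (ENNReal.le_tsum k) (by positivity)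
  -- membership of the fractional part in the unit cube
  have hfloor : ∀ x : Euc d, ∀ i, (x - zemb (fun j => ⌊x j⌋)) i ∈ Set.Icc (0:ℝ) 1 := by
    intro x i
    have h1 : (x - zemb (fun j => ⌊x j⌋)) i = x i - (⌊x i⌋ : ℝ) := by simp [zemb]
    rw [h1]
    constructor
    · linarith [Int.floor_le (x i)]
    · linarith [Int.lt_floor_add_one (x i)]
  -- the key term bound
  have hkey : ∀ (x : Euc d) (m : Fin d → ℤ),
      (∀ i, (x - zemb m) i ∈ Set.Icc (0:ℝ) 1) → ∀ (k : Fin d → ℤ) (i : Fin r),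
      (‖C i k * Φ i (x - zemb k)‖₊ : ℝ≥0∞) ≤ L i * b i (m - k) := by
    intro x m hmem k i
    have hxk : x - zemb k = (x - zemb m) + zemb (m - k) := by rw [zemb_sub]; abel
    rw [hxk, nnnorm_mul, ENNReal.coe_mul]
    exact mul_le_mul' (hL i k) (point_le_cubeSup (hΦ i).1 (m - k) hmem)
  have hgkey : ∀ (x : Euc d) (m : Fin d → ℤ),
      (∀ i, (x - zemb m) i ∈ Set.Icc (0:ℝ) 1) → ∀ (k : Fin d → ℤ),
      (‖∑ i, C i k * Φ i (x - zemb k)‖₊ : ℝ≥0∞) ≤ ∑ i, L i * b i (m - k) := by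
    intro x m hmem k
    calc (‖∑ i, C i k * Φ i (x - zemb k)‖₊ : ℝ≥0∞)
        ≤ ∑ i, (‖C i k * Φ i (x - zemb k)‖₊ : ℝ≥0∞) := by
          exact_mod_cast nnnorm_sum_le Finset.univ (fun i => C i k * Φ i (x - zemb k))
      _ ≤ ∑ i, L i * b i (m - k) := Finset.sum_le_sum fun i _ => hkey x m hmem k i
  have htransl : ∀ (i : Fin r) (m : Fin d → ℤ), ∑' k, b i (m - k) = A i := by
    intro i m
    simpa using (Equiv.subLeft m).tsum_eq (b i)
  have hprodsum : ∀ m : Fin d → ℤ,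
      ∑' q : (Fin d → ℤ) × Fin r, L q.2 * b q.2 (m - q.1) = ∑ i, L i * A i := by
    intro m
    rw [ENNReal.tsum_prod (f := fun k i => L i * b i (m - k)), ENNReal.tsum_comm, tsum_fintype]
    refine Finset.sum_congr rfl fun i _ => ?_
    rw [ENNReal.tsum_mul_left, htransl i m]
  have hfinsum : (∑ i, L i * A i) ≠ ∞ := by
    rw [← lt_top_iff_ne_top]
    exact ENNReal.sum_lt_top.mpr fun i _ =>
      ENNReal.mul_lt_top (hLfin i).lt_top (hA i).lt_top
  -- Part 1 : absolute convergence
  have habs : ∀ x : Euc d,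
      Summable (fun q : (Fin d → ℤ) × Fin r => ‖C q.2 q.1 * Φ q.2 (x - zemb q.1)‖) := by
    intro x
    have hnn : Summable (fun q : (Fin d → ℤ) × Fin r => ‖C q.2 q.1 * Φ q.2 (x - zemb q.1)‖₊) := by
      rw [← ENNReal.tsum_coe_ne_top_iff_summable]
      refine ne_top_of_le_ne_top ?_ (ENNReal.tsum_le_tsum fun q =>
        hkey x (fun j => ⌊x j⌋) (hfloor x) q.1 q.2)
      rw [hprodsum]
      exact hfinsum
    simpa [coe_nnnorm] using NNReal.summable_coe.mpr hnn
  refine ⟨habs, ?_, ?_⟩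
  · -- Part 2 : continuity
    rw [continuous_iff_continuousAt]
    intro x₀
    set F : Finset (Fin d → ℤ) :=
      Fintype.piFinset fun i => Finset.Icc (⌊x₀ i⌋ - 1) (⌊x₀ i⌋ + 1) with hF
    set S : Set (Euc d) := {x | ∀ i, |x i - x₀ i| < 1} with hSdef
    have hSo : IsOpen S := by
      rw [hSdef, Set.setOf_forall]
      have hcoord : ∀ i, Continuous fun x : Euc d => x i := fun i => PiLp.continuous_apply 2 _ i
      exact isOpen_iInter_of_finite fun i =>
        isOpen_lt (((hcoord i).sub continuous_const).abs) continuous_const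
    have hx₀S : x₀ ∈ S := fun i => by simp
    have hmF : ∀ x ∈ S, (fun j => ⌊x j⌋) ∈ F := by
      intro x hx
      rw [hF, Fintype.mem_piFinset]
      intro i
      rw [Finset.mem_Icc]
      have h1 := hx i
      rw [abs_lt] at h1
      constructor
      · refine Int.le_floor.mpr ?_
        push_cast
        linarith [Int.floor_le (x₀ i)]
      · have h2 : x i ≤ x₀ i + ((1:ℤ):ℝ) := by push_cast; linarith
        have h3 := Int.floor_le_floor h2
        rwa [Int.floor_add_intCast] at h3
    set U : (Fin d → ℤ) → ℝ≥0∞ := fun k => ∑ m ∈ F, ∑ i, L i * b i (m - k) with hU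
    have hUsum : ∑' k, U k = ∑ m ∈ F, ∑ i, L i * A i := by
      rw [hU]
      calc ∑' k, ∑ m ∈ F, ∑ i, L i * b i (m - k)
          = ∑ m ∈ F, ∑' k, ∑ i, L i * b i (m - k) :=
            Summable.tsum_finsetSum fun _ _ => ENNReal.summable
        _ = ∑ m ∈ F, ∑ i, ∑' k, L i * b i (m - k) :=
            Finset.sum_congr rfl fun m _ => Summable.tsum_finsetSum fun _ _ => ENNReal.summable
        _ = ∑ m ∈ F, ∑ i, L i * A i := by
            refine Finset.sum_congr rfl fun m _ => Finset.sum_congr rfl fun i _ => ?_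
            rw [ENNReal.tsum_mul_left, htransl i m]
    have hUfin : ∑' k, U k ≠ ∞ := by
      rw [hUsum, ← lt_top_iff_ne_top]
      exact ENNReal.sum_lt_top.mpr fun m _ => hfinsum.lt_top
    have hUk : ∀ k, U k ≠ ∞ := fun k => ne_top_of_le_ne_top hUfin (ENNReal.le_tsum k)
    have hbound : ∀ (k : Fin d → ℤ), ∀ x ∈ S,
        ‖∑ i, C i k * Φ i (x - zemb k)‖ ≤ (U k).toReal := by
      intro k x hx
      have hgk : (‖∑ i, C i k * Φ i (x - zemb k)‖₊ : ℝ≥0∞) ≤ U k := by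
        refine (hgkey x (fun j => ⌊x j⌋) (hfloor x) k).trans ?_
        exact Finset.single_le_sum (f := fun m => ∑ i, L i * b i (m - k))
          (fun m _ => zero_le) (hmF x hx)
      have h2 : ‖∑ i, C i k * Φ i (x - zemb k)‖
          = ((‖∑ i, C i k * Φ i (x - zemb k)‖₊ : ℝ≥0∞)).toReal := by simp
      rw [h2]
      exact ENNReal.toReal_mono (hUk k) hgk
    have huSummable : Summable (fun k => (U k).toReal) := ENNReal.summable_toReal hUfin
    have htuo := tendstoUniformlyOn_tsum (f := fun k x => ∑ i, C i k * Φ i (x - zemb k))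
      huSummable hbound
    have hcOn : ContinuousOn (fun x => ∑' k, ∑ i, C i k * Φ i (x - zemb k)) S := by
      refine htuo.continuousOn (Filter.Frequently.of_forall fun tset => ?_)
      refine (continuous_finset_sum _ fun k _ => ?_).continuousOn
      exact continuous_finset_sum _ fun i _ =>
        continuous_const.mul ((hΦ i).1.comp (continuous_id.sub continuous_const))
    exact (hcOn.continuousAt (hSo.mem_nhds hx₀S) : ContinuousAt (genFun Φ C) x₀)
  · -- Part 3 : finite W^p norm
    have hcube : ∀ n : Fin d → ℤ, cubeSup (genFun Φ C) n ≤
        ∑ i, ∑' k, (‖C i k‖₊ : ℝ≥0∞) * b i (n - k) := by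
      intro n
      refine essSup_le_of_ae_le _ ?_
      filter_upwards [ae_restrict_mem (Qmeas d)] with y hy
      have hy' : ∀ i, y i ∈ Set.Icc (0:ℝ) 1 := hy
      set x : Euc d := y + zemb n with hx
      have hmem : ∀ i, (x - zemb n) i ∈ Set.Icc (0:ℝ) 1 := by
        have hxy : x - zemb n = y := by rw [hx]; abel
        rw [hxy]; exact hy'
      have hmaj : ∑' k, ∑ i, L i * b i (n - k) ≠ ∞ := by
        rw [Summable.tsum_finsetSum fun _ _ => ENNReal.summable]
        have : ∀ i ∈ Finset.univ, ∑' k, L i * b i (n - k) = L i * A i := fun i _ => by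
          rw [ENNReal.tsum_mul_left, htransl i n]
        rw [Finset.sum_congr rfl this]
        exact hfinsum
      have hsgn : Summable fun k => ‖∑ i, C i k * Φ i (x - zemb k)‖₊ := by
        rw [← ENNReal.tsum_coe_ne_top_iff_summable]
        exact ne_top_of_le_ne_top hmaj (ENNReal.tsum_le_tsum (hgkey x n hmem))
      show (‖genFun Φ C x‖₊ : ℝ≥0∞) ≤ _
      calc (‖genFun Φ C x‖₊ : ℝ≥0∞)
          ≤ (↑(∑' k, ‖∑ i, C i k * Φ i (x - zemb k)‖₊) : ℝ≥0∞) := by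
            exact_mod_cast nnnorm_tsum_le hsgn
        _ = ∑' k, (‖∑ i, C i k * Φ i (x - zemb k)‖₊ : ℝ≥0∞) := ENNReal.coe_tsum hsgn
        _ ≤ ∑' k, ∑ i, (‖C i k‖₊ : ℝ≥0∞) * b i (n - k) := by
            refine ENNReal.tsum_le_tsum fun k => ?_
            calc (‖∑ i, C i k * Φ i (x - zemb k)‖₊ : ℝ≥0∞)
                ≤ ∑ i, (‖C i k * Φ i (x - zemb k)‖₊ : ℝ≥0∞) := by
                  exact_mod_cast nnnorm_sum_le Finset.univ (fun i => C i k * Φ i (x - zemb k))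
              _ ≤ ∑ i, (‖C i k‖₊ : ℝ≥0∞) * b i (n - k) := by
                  refine Finset.sum_le_sum fun i _ => ?_
                  have hxk : x - zemb k = (x - zemb n) + zemb (n - k) := by
                    rw [zemb_sub]; abel
                  rw [hxk, nnnorm_mul, ENNReal.coe_mul]
                  exact mul_le_mul' le_rfl (point_le_cubeSup (hΦ i).1 (n - k) hmem)
        _ = ∑ i, ∑' k, (‖C i k‖₊ : ℝ≥0∞) * b i (n - k) :=
            Summable.tsum_finsetSum fun _ _ => ENNReal.summable
    by_cases hptop : p = ∞
    · subst hptop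
      have hT : ∀ (i : Fin r) (n : Fin d → ℤ),
          ∑' k, (‖C i k‖₊ : ℝ≥0∞) * b i (n - k) ≤ L i * A i := by
        intro i n
        calc ∑' k, (‖C i k‖₊ : ℝ≥0∞) * b i (n - k)
            ≤ ∑' k, L i * b i (n - k) :=
              ENNReal.tsum_le_tsum fun k => mul_le_mul' (hL i k) le_rfl
          _ = L i * A i := by rw [ENNReal.tsum_mul_left, htransl i n]
      unfold WNorm
      rw [if_pos rfl]
      refine lt_of_le_of_lt (iSup_le fun n => (hcube n).trans
        (Finset.sum_le_sum fun i _ => hT i n)) ?_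
      exact hfinsum.lt_top
    · have ht1 : (1:ℝ) ≤ p.toReal := by
        have := ENNReal.toReal_mono hptop hp
        simpa using this
      have ht0 : (0:ℝ) < p.toReal := by linarith
      have hCt : ∀ i, ∑' k, (‖C i k‖₊ : ℝ≥0∞) ^ p.toReal ≠ ∞ := by
        intro i
        have h2 : (lpNorm p (C i)) ^ p.toReal < ∞ :=
          ENNReal.rpow_lt_top_of_nonneg ht0.le (hLfin i)
        have h1 : (lpNorm p (C i)) ^ p.toReal
            = ∑' k, (‖C i k‖₊ : ℝ≥0∞) ^ p.toReal := by
          unfold _root_.lpNorm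
          rw [if_neg hptop, ← ENNReal.rpow_mul, one_div_mul_cancel ht0.ne', ENNReal.rpow_one]
        rw [h1] at h2
        exact h2.ne
      unfold WNorm
      rw [if_neg hptop]
      refine ENNReal.rpow_lt_top_of_nonneg (by positivity) ?_
      rw [← lt_top_iff_ne_top]
      calc ∑' n : Fin d → ℤ, cubeSup (genFun Φ C) n ^ p.toReal
          ≤ ∑' n : Fin d → ℤ, ((r : ℝ≥0∞) ^ p.toReal *
              ∑ i, (∑' k, (‖C i k‖₊ : ℝ≥0∞) * b i (n - k)) ^ p.toReal) :=
            ENNReal.tsum_le_tsum fun n =>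
              (ENNReal.rpow_le_rpow (hcube n) ht0.le).trans
                (sum_rpow_le (fun i => ∑' k, (‖C i k‖₊ : ℝ≥0∞) * b i (n - k)) ht0)
        _ = (r : ℝ≥0∞) ^ p.toReal * ∑ i, ∑' n : Fin d → ℤ,
              (∑' k, (‖C i k‖₊ : ℝ≥0∞) * b i (n - k)) ^ p.toReal := by
            rw [ENNReal.tsum_mul_left]
            congr 1
            exact Summable.tsum_finsetSum fun _ _ => ENNReal.summable
        _ ≤ (r : ℝ≥0∞) ^ p.toReal * ∑ i,
              (∑' k, (‖C i k‖₊ : ℝ≥0∞) ^ p.toReal) * (∑' k, b i k) ^ p.toReal := by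
            refine mul_le_mul_right (Finset.sum_le_sum fun i _ => ?_) _
            exact young_ineq (fun k => (‖C i k‖₊ : ℝ≥0∞)) (b i) ht1
        _ < ∞ := by
            refine ENNReal.mul_lt_top ?_ ?_
            · exact ENNReal.rpow_lt_top_of_nonneg ht0.le (ENNReal.natCast_ne_top r)
            · refine ENNReal.sum_lt_top.mpr fun i _ => ENNReal.mul_lt_top ?_ ?_
              · exact (hCt i).lt_top
              · exact ENNReal.rpow_lt_top_of_nonneg ht0.le (hA i)
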